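/- arXiv:2305.04918 — 5 statements merged into one kernel-verified Lean document; each statement's English description precedes it below -/
import Mathlib

section
/- Let a bi-matrix game on n ≥ 2 pure strategies have all payoff entries in [0,1], and suppose (z*, z*) is a Nash equilibrium (a symmetric equilibrium) such that some pure strategy t satisfies z*ₜ ≥ δ for some δ > 0. Then there exists z⁻ ∈ Δₙ with ‖z* − z⁻‖₁ ≥ 2δ such that both (z⁻, z*) and (z*, z⁻) are 2δ-Nash equilibria of the game. -/
open Finset

/-- The probability simplex over a finite strategy set `S`. -/
def simplex (S : Type*) [Fintype S] : Set (S → ℝ) :=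
  {x | (∀ i, 0 ≤ x i) ∧ ∑ i, x i = 1}

/-- Expected payoff `Σᵢⱼ xᵢ yⱼ A i j`. -/
def payoff {S : Type*} [Fintype S] (A : S → S → ℝ) (x y : S → ℝ) : ℝ :=
  ∑ i, ∑ j, x i * y j * A i j

/-- The point mass at pure strategy `s`. -/
def pureStrat {S : Type*} [DecidableEq S] (s : S) : S → ℝ :=
  fun i => if i = s then 1 else 0

/-- Support of a mixed strategy. -/
def supp {S : Type*} (x : S → ℝ) : Set S := {i | 0 < x i}

/-- L1 distance between mixed strategies. -/
def dist1 {S : Type*} [Fintype S] (x y : S → ℝ) : ℝ := ∑ i, |x i - y i|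

/-- `(x, y)` is an ε-Nash equilibrium of the bi-matrix game `(R, C)`. -/
def IsEpsNash {S : Type*} [Fintype S] [DecidableEq S]
    (R C : S → S → ℝ) (x y : S → ℝ) (ε : ℝ) : Prop :=
  x ∈ simplex S ∧ y ∈ simplex S ∧
  (∀ s : S, payoff R (pureStrat s) y ≤ payoff R x y + ε) ∧
  (∀ s : S, payoff C x (pureStrat s) ≤ payoff C x y + ε)

lemma pureStrat_mem {S : Type*} [Fintype S] [DecidableEq S] (s : S) :
    pureStrat s ∈ simplex S := by
  constructor
  · intro i; unfold pureStrat; split <;> norm_num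
  · simp [pureStrat]

lemma payoff_nonneg {S : Type*} [Fintype S] (A : S → S → ℝ)
    (hA : ∀ i j, A i j ∈ Set.Icc (0:ℝ) 1) {x y : S → ℝ}
    (hx : x ∈ simplex S) (hy : y ∈ simplex S) : 0 ≤ payoff A x y := by
  refine Finset.sum_nonneg fun i _ => Finset.sum_nonneg fun j _ => ?_
  exact mul_nonneg (mul_nonneg (hx.1 i) (hy.1 j)) (hA i j).1

lemma payoff_le_one {S : Type*} [Fintype S] (A : S → S → ℝ)
    (hA : ∀ i j, A i j ∈ Set.Icc (0:ℝ) 1) {x y : S → ℝ}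
    (hx : x ∈ simplex S) (hy : y ∈ simplex S) : payoff A x y ≤ 1 := by
  have h1 : payoff A x y ≤ ∑ i, ∑ j, x i * y j := by
    refine Finset.sum_le_sum fun i _ => Finset.sum_le_sum fun j _ => ?_
    exact mul_le_of_le_one_right (mul_nonneg (hx.1 i) (hy.1 j)) (hA i j).2
  calc payoff A x y ≤ ∑ i, ∑ j, x i * y j := h1
    _ = (∑ i, x i) * (∑ j, y j) := by rw [Finset.sum_mul_sum]
    _ = 1 := by rw [hx.2, hy.2, one_mul]

lemma payoff_lin_left {S : Type*} [Fintype S] (A : S → S → ℝ)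
    (x u v y : S → ℝ) (c : ℝ) :
    payoff A (fun i => x i + c * (u i - v i)) y
      = payoff A x y + c * (payoff A u y - payoff A v y) := by
  unfold payoff
  simp only [Finset.mul_sum, ← Finset.sum_sub_distrib, ← Finset.sum_add_distrib]
  exact Finset.sum_congr rfl fun i _ => Finset.sum_congr rfl fun j _ => by ring

lemma payoff_lin_right {S : Type*} [Fintype S] (A : S → S → ℝ)
    (x u v y : S → ℝ) (c : ℝ) :
    payoff A y (fun i => x i + c * (u i - v i))
      = payoff A y x + c * (payoff A y u - payoff A y v) := by
  unfold payoff
  simp only [Finset.mul_sum, ← Finset.sum_sub_distrib, ← Finset.sum_add_distrib]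
  exact Finset.sum_congr rfl fun i _ => Finset.sum_congr rfl fun j _ => by ring

theorem stmt2 {n : ℕ} (hn : 2 ≤ n) (R C : Fin n → Fin n → ℝ)
    (hR : ∀ i j, R i j ∈ Set.Icc (0 : ℝ) 1) (hC : ∀ i j, C i j ∈ Set.Icc (0 : ℝ) 1)
    (z : Fin n → ℝ) (hNash : IsEpsNash R C z z 0)
    (δ : ℝ) (hδ : 0 < δ) (t : Fin n) (ht : δ ≤ z t) :
    ∃ zm : Fin n → ℝ, zm ∈ simplex (Fin n) ∧ dist1 z zm ≥ 2 * δ ∧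
      IsEpsNash R C zm z (2 * δ) ∧ IsEpsNash R C z zm (2 * δ) := by
  obtain ⟨hz, -, hR1, hC1⟩ := hNash
  obtain ⟨s, hst⟩ : ∃ s : Fin n, s ≠ t :=
    Fintype.exists_ne_of_one_lt_card (by simp; omega) t
  set zm : Fin n → ℝ := fun i => z i + δ * (pureStrat s i - pureStrat t i) with hzm
  have hzms : zm ∈ simplex (Fin n) := by
    constructor
    · intro i
      have h0 := hz.1 i
      simp only [hzm, pureStrat]
      split_ifs with h1 h2 h3
      · exact absurd (h1.symm.trans h2) hst
      · linarith
      · rw [h3]; linarith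
      · linarith
    · simp only [hzm]
      rw [Finset.sum_add_distrib, hz.2]
      simp only [pureStrat, ← Finset.mul_sum, Finset.sum_sub_distrib]
      simp
  have hd : dist1 z zm = 2 * δ := by
    unfold dist1
    have : ∀ i, |z i - zm i| = δ * pureStrat s i + δ * pureStrat t i := by
      intro i
      simp only [hzm, pureStrat]
      split_ifs with h1 h2
      · exact absurd (h1.symm.trans h2) hst
      · simp [abs_of_nonneg hδ.le]
      · simp [abs_of_nonneg hδ.le]
      · simp
    rw [Finset.sum_congr rfl fun i _ => this i]
    simp [Finset.sum_add_distrib, ← Finset.mul_sum, pureStrat]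
    ring
  have hδ1 : δ ≤ 1 := by
    have := Finset.single_le_sum (fun i _ => hz.1 i) (Finset.mem_univ t)
    rw [hz.2] at this; linarith
  have key : ∀ (A : Fin n → Fin n → ℝ), (∀ i j, A i j ∈ Set.Icc (0:ℝ) 1) →
      ∀ y ∈ simplex (Fin n),
      payoff A z y - δ ≤ payoff A zm y ∧ payoff A zm y ≤ payoff A z y + δ := by
    intro A hA y hy
    rw [hzm, payoff_lin_left]
    have h1 := payoff_nonneg A hA (pureStrat_mem s) hy
    have h2 := payoff_le_one A hA (pureStrat_mem s) hy
    have h3 := payoff_nonneg A hA (pureStrat_mem t) hy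
    have h4 := payoff_le_one A hA (pureStrat_mem t) hy
    constructor <;> nlinarith
  have keyR : ∀ (A : Fin n → Fin n → ℝ), (∀ i j, A i j ∈ Set.Icc (0:ℝ) 1) →
      ∀ y ∈ simplex (Fin n),
      payoff A y z - δ ≤ payoff A y zm ∧ payoff A y zm ≤ payoff A y z + δ := by
    intro A hA y hy
    rw [hzm, payoff_lin_right]
    have h1 := payoff_nonneg A hA hy (pureStrat_mem s)
    have h2 := payoff_le_one A hA hy (pureStrat_mem s)
    have h3 := payoff_nonneg A hA hy (pureStrat_mem t)
    have h4 := payoff_le_one A hA hy (pureStrat_mem t)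
    constructor <;> nlinarith
  refine ⟨zm, hzms, hd.ge, ⟨hzms, hz, ?_, ?_⟩, ⟨hz, hzms, ?_, ?_⟩⟩
  · intro u
    have := (key R hR z hz).1
    have h := hR1 u
    linarith
  · intro u
    have hL := (keyR C hC (pureStrat u) (pureStrat_mem u)).2
    have hRlo := (keyR C hC z hz).1
    -- wrong direction: payoff C zm (pureStrat u) vs payoff C zm z
    have hL' := (key C hC (pureStrat u) (pureStrat_mem u)).2
    have hRlo' := (key C hC z hz).1
    have h := hC1 u
    linarith
  · intro u
    have hlo := (keyR R hR (pureStrat u) (pureStrat_mem u)).2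
    have hhi := (keyR R hR z hz).1
    have h := hR1 u
    linarith
  · intro u
    have := (keyR C hC (pureStrat u) (pureStrat_mem u)).1
    have hlo := (keyR C hC z hz).1
    have h := hC1 u
    linarith
end

section
/- Let a bi-matrix game on n ≥ 2 pure strategies have all payoff entries in [0,1], and suppose the game possesses at least one Nash equilibrium. Then, with δ = 1/n, the game has a (δ, 4δ)-far Nash equilibrium: there exists a 4/n-Nash equilibrium (x, y) with ‖x − y‖₁ ≥ 2/n. -/
open Finset

section aux
variable {n : ℕ}

lemma pureStrat_mem_simplex (s : Fin n) : pureStrat s ∈ simplex (Fin n) := by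
  refine ⟨fun i => ?_, ?_⟩
  · unfold pureStrat; split <;> norm_num
  · simp [pureStrat]

lemma payoff_diff (A : Fin n → Fin n → ℝ) (hA : ∀ i j, A i j ∈ Set.Icc (0:ℝ) 1)
    (x x' y : Fin n → ℝ) (hy : y ∈ simplex (Fin n)) :
    |payoff A x' y - payoff A x y| ≤ ∑ i, |x' i - x i| := by
  have key : payoff A x' y - payoff A x y = ∑ i, (x' i - x i) * ∑ j, y j * A i j := by
    unfold payoff
    rw [← Finset.sum_sub_distrib]
    refine Finset.sum_congr rfl fun i _ => ?_
    rw [Finset.mul_sum, ← Finset.sum_sub_distrib]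
    refine Finset.sum_congr rfl fun j _ => ?_
    ring
  rw [key]
  refine (Finset.abs_sum_le_sum_abs _ _).trans (Finset.sum_le_sum fun i _ => ?_)
  rw [abs_mul]
  have h0 : (0:ℝ) ≤ ∑ j, y j * A i j :=
    Finset.sum_nonneg fun j _ => mul_nonneg (hy.1 j) (hA i j).1
  have h1 : |∑ j, y j * A i j| ≤ 1 := by
    rw [abs_of_nonneg h0]
    calc ∑ j, y j * A i j ≤ ∑ j, y j :=
          Finset.sum_le_sum fun j _ => by nlinarith [(hA i j).2, hy.1 j]
      _ = 1 := hy.2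
  nlinarith [abs_nonneg (x' i - x i)]

lemma dist1_ge_two_abs (x y : Fin n → ℝ) (hx : x ∈ simplex (Fin n)) (hy : y ∈ simplex (Fin n))
    (j : Fin n) : 2 * |x j - y j| ≤ dist1 x y := by
  have hsum : ∑ i, (x i - y i) = 0 := by
    rw [Finset.sum_sub_distrib, hx.2, hy.2]; ring
  have h1 : ∑ i ∈ univ.erase j, (x i - y i) = -(x j - y j) := by
    have h : ∑ i ∈ univ.erase j, (x i - y i) + (x j - y j) = ∑ i, (x i - y i) :=
      Finset.sum_erase_add univ _ (mem_univ j)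
    linarith
  have h2 : |x j - y j| ≤ ∑ i ∈ univ.erase j, |x i - y i| := by
    calc |x j - y j| = |∑ i ∈ univ.erase j, (x i - y i)| := by rw [h1, abs_neg]
      _ ≤ _ := Finset.abs_sum_le_sum_abs _ _
  have h3 : ∑ i ∈ univ.erase j, |x i - y i| + |x j - y j| = ∑ i, |x i - y i| :=
    Finset.sum_erase_add univ _ (mem_univ j)
  unfold dist1
  linarith

lemma payoff_transpose (A : Fin n → Fin n → ℝ) (x y : Fin n → ℝ) :
    payoff (fun i j => A j i) y x = payoff A x y := by
  unfold payoff
  rw [Finset.sum_comm]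
  refine Finset.sum_congr rfl fun i _ => Finset.sum_congr rfl fun j _ => ?_
  ring

lemma isEpsNash_transpose (R C : Fin n → Fin n → ℝ) (x y : Fin n → ℝ) (ε : ℝ) :
    IsEpsNash R C x y ε ↔ IsEpsNash (fun i j => C j i) (fun i j => R j i) y x ε := by
  unfold IsEpsNash
  constructor
  · rintro ⟨hx, hy, h1, h2⟩
    refine ⟨hy, hx, fun s => ?_, fun s => ?_⟩
    · calc payoff (fun i j => C j i) (pureStrat s) x
          = payoff C x (pureStrat s) := payoff_transpose C x (pureStrat s)
        _ ≤ payoff C x y + ε := h2 s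
        _ = payoff (fun i j => C j i) y x + ε := by rw [payoff_transpose C x y]
    · calc payoff (fun i j => R j i) y (pureStrat s)
          = payoff R (pureStrat s) y := payoff_transpose R (pureStrat s) y
        _ ≤ payoff R x y + ε := h1 s
        _ = payoff (fun i j => R j i) y x + ε := by rw [payoff_transpose R x y]
  · rintro ⟨hy, hx, h1, h2⟩
    refine ⟨hx, hy, fun s => ?_, fun s => ?_⟩
    · calc payoff R (pureStrat s) y
          = payoff (fun i j => R j i) y (pureStrat s) := (payoff_transpose R (pureStrat s) y).symm
        _ ≤ payoff (fun i j => R j i) y x + ε := h2 s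
        _ = payoff R x y + ε := by rw [payoff_transpose R x y]
    · calc payoff C x (pureStrat s)
          = payoff (fun i j => C j i) (pureStrat s) x := (payoff_transpose C x (pureStrat s)).symm
        _ ≤ payoff (fun i j => C j i) y x + ε := h1 s
        _ = payoff C x y + ε := by rw [payoff_transpose C x y]

lemma dist1_comm (x y : Fin n → ℝ) : dist1 x y = dist1 y x := by
  unfold dist1
  exact Finset.sum_congr rfl fun i _ => abs_sub_comm _ _

lemma sum_erase_eq (x : Fin n → ℝ) (hx : x ∈ simplex (Fin n)) (j : Fin n) :
    ∑ i ∈ univ.erase j, x i = 1 - x j := by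
  have h : ∑ i ∈ univ.erase j, x i + x j = ∑ i, x i := Finset.sum_erase_add univ _ (mem_univ j)
  rw [hx.2] at h
  linarith

lemma coord_le_one (x : Fin n → ℝ) (hx : x ∈ simplex (Fin n)) (j : Fin n) : x j ≤ 1 := by
  have h := sum_erase_eq x hx j
  have : (0:ℝ) ≤ ∑ i ∈ univ.erase j, x i := Finset.sum_nonneg fun i _ => hx.1 i
  linarith

lemma pair_le_one (x : Fin n → ℝ) (hx : x ∈ simplex (Fin n)) {i j : Fin n} (hij : i ≠ j) :
    x i + x j ≤ 1 := by
  have h := sum_erase_eq x hx i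
  have h2 : x j ≤ ∑ k ∈ univ.erase i, x k :=
    Finset.single_le_sum (fun k _ => hx.1 k) (Finset.mem_erase.2 ⟨hij.symm, mem_univ j⟩)
  linarith

/-- Key perturbation lemma. -/
lemma perturb (hn : 2 ≤ n) (R C : Fin n → Fin n → ℝ)
    (hR : ∀ i j, R i j ∈ Set.Icc (0 : ℝ) 1) (hC : ∀ i j, C i j ∈ Set.Icc (0 : ℝ) 1)
    (x y : Fin n → ℝ) (hNash : IsEpsNash R C x y 0)
    (j : Fin n) (s : ℝ) (hs0 : 0 ≤ s) (hs1 : s ≤ 1)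
    (hcost : 2 * s * (1 - x j) ≤ 2 / (n:ℝ))
    (hdist : 1 / (n:ℝ) ≤ |((1 - s) * x j + s) - y j|) :
    ∃ x' y' : Fin n → ℝ, IsEpsNash R C x' y' (4 / (n:ℝ)) ∧ dist1 x' y' ≥ 2 / (n:ℝ) := by
  obtain ⟨hx, hy, h1, h2⟩ := hNash
  have hnR : (2:ℝ) ≤ (n:ℝ) := by exact_mod_cast hn
  have hnpos : (0:ℝ) < (n:ℝ) := by linarith
  set x' : Fin n → ℝ := fun i => (1 - s) * x i + s * pureStrat j i with hx'def
  have hx' : x' ∈ simplex (Fin n) := by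
    refine ⟨fun i => ?_, ?_⟩
    · have ha := hx.1 i
      have hb := (pureStrat_mem_simplex j).1 i
      show (0:ℝ) ≤ (1 - s) * x i + s * pureStrat j i
      nlinarith
    · have : ∑ i, x' i = (1 - s) * ∑ i, x i + s * ∑ i, pureStrat j i := by
        rw [Finset.mul_sum, Finset.mul_sum, ← Finset.sum_add_distrib]
      rw [this, hx.2, (pureStrat_mem_simplex j).2]; ring
  -- L1 distance between x' and x
  have hmove : ∑ i, |x' i - x i| = 2 * s * (1 - x j) := by
    have step : ∀ i, |x' i - x i| = s * |pureStrat j i - x i| := by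
      intro i
      have : x' i - x i = s * (pureStrat j i - x i) := by simp [hx'def]; ring
      rw [this, abs_mul, abs_of_nonneg hs0]
    calc ∑ i, |x' i - x i| = ∑ i, s * |pureStrat j i - x i| :=
          Finset.sum_congr rfl fun i _ => step i
      _ = s * ∑ i, |pureStrat j i - x i| := by rw [Finset.mul_sum]
      _ = 2 * s * (1 - x j) := by
          have hsplit : ∑ i ∈ univ.erase j, |pureStrat j i - x i| + |pureStrat j j - x j|
              = ∑ i, |pureStrat j i - x i| := Finset.sum_erase_add univ _ (mem_univ j)
          have hpj : pureStrat j j = (1:ℝ) := by simp [pureStrat]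
          have hj : |pureStrat j j - x j| = 1 - x j := by
            rw [hpj, abs_of_nonneg (by linarith [coord_le_one x hx j])]
          have hrest : ∑ i ∈ univ.erase j, |pureStrat j i - x i| = 1 - x j := by
            have heach : ∀ i ∈ univ.erase j, |pureStrat j i - x i| = x i := by
              intro i hi
              simp only [pureStrat, if_neg (Finset.mem_erase.1 hi).1]
              rw [show (0:ℝ) - x i = -(x i) by ring, abs_neg, abs_of_nonneg (hx.1 i)]
            rw [Finset.sum_congr rfl heach, sum_erase_eq x hx j]
          have htot : ∑ i, |pureStrat j i - x i| = 2 * (1 - x j) := by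
            rw [← hsplit, hj, hrest]; ring
          rw [htot]; ring
  have hmove' : ∑ i, |x' i - x i| ≤ 2 / (n:ℝ) := by rw [hmove]; exact hcost
  refine ⟨x', y, ⟨hx', hy, fun t => ?_, fun t => ?_⟩, ?_⟩
  · -- row player
    have hb := payoff_diff R hR x x' y hy
    have := h1 t
    have habs := abs_le.1 hb
    have h24 : (2:ℝ) / n ≤ 4 / n := by
      gcongr
      norm_num
    linarith [habs.1, hmove']
  · -- column player
    have hb1 := payoff_diff C hC x x' (pureStrat t) (pureStrat_mem_simplex t)
    have hb2 := payoff_diff C hC x x' y hy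
    have := h2 t
    have habs1 := abs_le.1 hb1
    have habs2 := abs_le.1 hb2
    have h42 : (4:ℝ) / n = 2 * (2 / n) := by ring
    linarith [habs1.2, habs2.1, hmove']
  · have hd := dist1_ge_two_abs x' y hx' hy j
    have : x' j = (1 - s) * x j + s := by simp [hx'def, pureStrat]
    rw [this] at hd
    calc 2 / (n:ℝ) = 2 * (1 / n) := by ring
      _ ≤ 2 * |((1 - s) * x j + s) - y j| := by linarith
      _ ≤ dist1 x' y := hd
end aux

theorem stmt3 {n : ℕ} (hn : 2 ≤ n) (R C : Fin n → Fin n → ℝ)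
    (hR : ∀ i j, R i j ∈ Set.Icc (0 : ℝ) 1) (hC : ∀ i j, C i j ∈ Set.Icc (0 : ℝ) 1)
    (hex : ∃ x y : Fin n → ℝ, IsEpsNash R C x y 0) :
    ∃ x y : Fin n → ℝ, IsEpsNash R C x y (4 / (n : ℝ)) ∧ dist1 x y ≥ 2 / (n : ℝ) := by
  obtain ⟨x, y, hNash⟩ := hex
  have hx := hNash.1
  have hy := hNash.2.1
  have hnR : (2:ℝ) ≤ (n:ℝ) := by exact_mod_cast hn
  have hnpos : (0:ℝ) < (n:ℝ) := by linarith
  by_cases hA : ∃ j, y j ≤ x j ∧ x j ≤ 1 - 1/(n:ℝ)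
  · obtain ⟨j, hjy, hjx⟩ := hA
    set s : ℝ := 1 / ((n:ℝ) * (1 - x j)) with hs
    have hxj1 : 1/(n:ℝ) ≤ 1 - x j := by
      have h1n : 0 < 1/(n:ℝ) := by positivity
      linarith
    have h1npos : (0:ℝ) < 1/(n:ℝ) := by positivity
    have hpos : 0 < (n:ℝ) * (1 - x j) := by nlinarith
    have hs0 : (0:ℝ) ≤ s := le_of_lt (by rw [hs]; positivity)
    have hinv : (n:ℝ) * (1/(n:ℝ)) = 1 := by field_simp
    have hs1 : s ≤ 1 := by
      rw [hs, div_le_one hpos]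
      nlinarith [mul_le_mul_of_nonneg_left hxj1 hnpos.le]
    have hcost : 2 * s * (1 - x j) = 2 / (n:ℝ) := by
      rw [hs]; field_simp [(by linarith : (0:ℝ) < 1 - x j).ne']
    have hkey : s * (1 - x j) = 1 / (n:ℝ) := by rw [hs]; field_simp [(by linarith : (0:ℝ) < 1 - x j).ne']
    have hdist : 1/(n:ℝ) ≤ |((1 - s) * x j + s) - y j| := by
      have heq : ((1 - s) * x j + s) - y j = (x j - y j) + s * (1 - x j) := by ring
      rw [heq, hkey, abs_of_nonneg (by linarith)]
      linarith
    exact perturb hn R C hR hC x y hNash j s hs0 hs1 (le_of_eq hcost) hdist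
  · by_cases hB : ∃ k, x k ≤ y k ∧ y k ≤ 1 - 1/(n:ℝ)
    · obtain ⟨k, hkx, hky⟩ := hB
      have hNash' := (isEpsNash_transpose R C x y 0).mp hNash
      set s : ℝ := 1 / ((n:ℝ) * (1 - y k)) with hs
      have h1npos : (0:ℝ) < 1/(n:ℝ) := by positivity
      have hyk1 : 1/(n:ℝ) ≤ 1 - y k := by linarith
      have hpos : 0 < (n:ℝ) * (1 - y k) := by nlinarith
      have hs0 : (0:ℝ) ≤ s := le_of_lt (by rw [hs]; positivity)
      have hinv : (n:ℝ) * (1/(n:ℝ)) = 1 := by field_simp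
      have hs1 : s ≤ 1 := by
        rw [hs, div_le_one hpos]
        nlinarith [mul_le_mul_of_nonneg_left hyk1 hnpos.le]
      have hcost : 2 * s * (1 - y k) = 2 / (n:ℝ) := by
        rw [hs]; field_simp [(by linarith : (0:ℝ) < 1 - y k).ne']
      have hkey : s * (1 - y k) = 1 / (n:ℝ) := by rw [hs]; field_simp [(by linarith : (0:ℝ) < 1 - y k).ne']
      have hdist : 1/(n:ℝ) ≤ |((1 - s) * y k + s) - x k| := by
        have heq : ((1 - s) * y k + s) - x k = (y k - x k) + s * (1 - y k) := by ring
        rw [heq, hkey, abs_of_nonneg (by linarith)]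
        linarith
      obtain ⟨y', x', hN, hd⟩ := perturb hn (fun i j => C j i) (fun i j => R j i)
        (fun i j => hC j i) (fun i j => hR j i) y x hNash' k s hs0 hs1 (le_of_eq hcost) hdist
      exact ⟨x', y', (isEpsNash_transpose R C x' y' (4/(n:ℝ))).mpr hN,
        by rw [dist1_comm]; exact hd⟩
    · push_neg at hA hB
      haveI : Nonempty (Fin n) := ⟨⟨0, by omega⟩⟩
      haveI : Nontrivial (Fin n) :=
        ⟨⟨⟨0, by omega⟩, ⟨1, by omega⟩, by simp [Fin.ext_iff]⟩⟩
      have h1npos : (0:ℝ) < 1/(n:ℝ) := by positivity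
      have h1n2 : 1/(n:ℝ) ≤ 1/2 := by
        rw [div_le_div_iff₀ hnpos (by norm_num)]; linarith
      have hex0 : ∃ j, y j ≤ x j := by
        by_contra h
        push_neg at h
        have hlt : (1:ℝ) < 1 := by
          calc (1:ℝ) = ∑ i, x i := hx.2.symm
            _ < ∑ i, y i := Finset.sum_lt_sum_of_nonempty Finset.univ_nonempty
                (fun i _ => h i)
            _ = 1 := hy.2
        exact absurd hlt (lt_irrefl 1)
      obtain ⟨j0, hj0⟩ := hex0
      have hxj0 : 1 - 1/(n:ℝ) < x j0 := hA j0 hj0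
      have hex1 : ∃ k, x k ≤ y k := by
        by_contra h
        push_neg at h
        have hlt : (1:ℝ) < 1 := by
          calc (1:ℝ) = ∑ i, y i := hy.2.symm
            _ < ∑ i, x i := Finset.sum_lt_sum_of_nonempty Finset.univ_nonempty
                (fun i _ => h i)
            _ = 1 := hx.2
        exact absurd hlt (lt_irrefl 1)
      obtain ⟨k0, hk0⟩ := hex1
      have hyk0 : 1 - 1/(n:ℝ) < y k0 := hB k0 hk0
      have hne : j0 ≠ k0 := by
        intro h
        subst h
        obtain ⟨i, hi⟩ := exists_ne j0
        rcases le_total (y i) (x i) with hle | hle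
        · have h1 : 1 - 1/(n:ℝ) < x i := hA i hle
          have h2 : x i + x j0 ≤ 1 := pair_le_one x hx hi
          linarith
        · have h1 : 1 - 1/(n:ℝ) < y i := hB i hle
          have h2 : y i + y j0 ≤ 1 := pair_le_one y hy hi
          linarith
      have hyj0 : y j0 < 1/(n:ℝ) := by
        have h2 := pair_le_one y hy hne
        linarith
      apply perturb hn R C hR hC x y hNash j0 1 zero_le_one le_rfl
      · have h2n : (2:ℝ)/(n:ℝ) = 2 * (1/(n:ℝ)) := by ring
        linarith
      · have heq : ((1 - 1) * x j0 + 1) - y j0 = 1 - y j0 := by ring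
        rw [heq, abs_of_nonneg (by linarith [coord_le_one y hy j0])]
        linarith
end

section
/- Every bi-matrix game on n ≥ 3 pure strategies with all payoff entries in [0,1] has, for every ε with 0 < ε ≤ 1, an ε-constrained disjoint equilibrium. -/
open Finset

/-- `(x, y)` is an ε-constrained disjoint equilibrium: the supports are disjoint
and neither player can gain more than ε by deviating to a mixed strategy whose
support is disjoint from the opponent's support. -/
def IsConstrainedDisjointEq {S : Type*} [Fintype S]
    (R C : S → S → ℝ) (x y : S → ℝ) (ε : ℝ) : Prop :=
  x ∈ simplex S ∧ y ∈ simplex S ∧ supp x ∩ supp y = ∅ ∧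
  (∀ x' ∈ simplex S, supp x' ∩ supp y = ∅ → payoff R x' y ≤ payoff R x y + ε) ∧
  (∀ y' ∈ simplex S, supp y' ∩ supp x = ∅ → payoff C x y' ≤ payoff C x y + ε)

lemma payoff_pure_right {n : ℕ} (A : Fin n → Fin n → ℝ) (x : Fin n → ℝ) (z : Fin n) :
    payoff A x (pureStrat z) = ∑ i, x i * A i z := by
  unfold payoff pureStrat
  refine Finset.sum_congr rfl fun i _ => ?_
  simp [mul_ite, ite_mul, Finset.sum_ite_eq']

lemma pure_mem_simplex {n : ℕ} (z : Fin n) : pureStrat z ∈ simplex (Fin n) := by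
  constructor
  · intro i; unfold pureStrat; split <;> norm_num
  · simp [pureStrat]

lemma supp_pure {n : ℕ} (z : Fin n) : supp (pureStrat z) = {z} := by
  ext i
  simp only [supp, pureStrat, Set.mem_setOf_eq, Set.mem_singleton_iff]
  split <;> simp_all <;> linarith

theorem stmt4 {n : ℕ} (hn : 3 ≤ n) (R C : Fin n → Fin n → ℝ)
    (hR : ∀ i j, R i j ∈ Set.Icc (0 : ℝ) 1) (hC : ∀ i j, C i j ∈ Set.Icc (0 : ℝ) 1)
    (ε : ℝ) (hε : 0 < ε) (hε1 : ε ≤ 1) :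
    ∃ x y : Fin n → ℝ, IsConstrainedDisjointEq R C x y ε := by
  have hn1 : (2:ℝ) ≤ (n:ℝ) - 1 := by
    have : (3:ℝ) ≤ (n:ℝ) := by exact_mod_cast hn
    linarith
  set z : Fin n := ⟨0, by omega⟩ with hzdef
  have hone : (⟨1, by omega⟩ : Fin n) ∈ univ.erase z := by
    simp [hzdef, Fin.ext_iff]
  obtain ⟨i0, hi0, hmax⟩ :=
    Finset.exists_max_image (univ.erase z) (fun i => R i z) ⟨_, hone⟩
  have hi0z : i0 ≠ z := (Finset.mem_erase.mp hi0).1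
  set c : ℝ := ε / ((n:ℝ) - 1) with hcdef
  have hcpos : 0 < c := div_pos hε (by linarith)
  set M := R i0 z with hMdef
  have hM0 : 0 ≤ M := (hR i0 z).1
  have hM1 : M ≤ 1 := (hR i0 z).2
  set x : Fin n → ℝ :=
    fun i => (if i = z then 0 else c) + (if i = i0 then 1 - ε else 0) with hxdef
  have hxnn : ∀ i, 0 ≤ x i := by
    intro i; dsimp [x]
    split <;> split <;> linarith
  have hxpos : ∀ i, i ≠ z → 0 < x i := by
    intro i hi; dsimp [x]; rw [if_neg hi]
    split <;> linarith
  have hxz : x z = 0 := by simp [hxdef, Ne.symm hi0z, hi0z]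
  have hxsum : ∑ i, x i = 1 := by
    have h1 : ∀ i : Fin n, (if i = z then (0:ℝ) else c) = c - (if i = z then c else 0) := by
      intro i; split <;> ring
    have h2 : ∑ i, x i =
        ∑ i, ((c - (if i = z then c else 0)) + (if i = i0 then 1 - ε else 0)) := by
      refine Finset.sum_congr rfl fun i _ => ?_
      dsimp [x]; rw [h1]
    rw [h2]
    rw [Finset.sum_add_distrib, Finset.sum_sub_distrib]
    simp only [Finset.sum_const, Finset.card_univ, Fintype.card_fin, nsmul_eq_mul,
      Finset.sum_ite_eq', Finset.mem_univ, if_true]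
    have : ((n:ℝ) - 1) * c = ε := by
      rw [hcdef]; field_simp
    nlinarith [this]
  refine ⟨x, pureStrat z, ⟨hxnn, hxsum⟩, pure_mem_simplex z, ?_, ?_, ?_⟩
  · -- disjoint supports
    rw [supp_pure]
    ext i
    simp only [Set.mem_inter_iff, Set.mem_singleton_iff, Set.mem_empty_iff_false, iff_false,
      not_and, supp, Set.mem_setOf_eq]
    intro hix hiz
    subst hiz
    rw [hxz] at hix
    exact absurd hix (lt_irrefl 0)
  · -- row player's constrained deviations
    intro x' hx' hd
    have hx'z : x' z = 0 := by
      have hne := Set.eq_empty_iff_forall_notMem.mp hd z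
      rw [supp_pure] at hne
      simp only [Set.mem_inter_iff, Set.mem_singleton_iff, and_true, supp,
        Set.mem_setOf_eq] at hne
      exact le_antisymm (not_lt.mp hne) (hx'.1 z)
    rw [payoff_pure_right, payoff_pure_right]
    have hup : ∑ i, x' i * R i z ≤ M := by
      calc ∑ i, x' i * R i z ≤ ∑ i, x' i * M := by
            refine Finset.sum_le_sum fun i _ => ?_
            by_cases hiz : i = z
            · subst hiz; simp [hx'z]
            · exact mul_le_mul_of_nonneg_left
                (hmax i (Finset.mem_erase.mpr ⟨hiz, Finset.mem_univ i⟩)) (hx'.1 i)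
        _ = M := by rw [← Finset.sum_mul, hx'.2, one_mul]
    have hlow : (1 - ε) * M ≤ ∑ i, x i * R i z := by
      have hsingle : x i0 * R i0 z ≤ ∑ i, x i * R i z :=
        Finset.single_le_sum (f := fun i => x i * R i z)
          (fun i _ => mul_nonneg (hxnn i) (hR i z).1) (Finset.mem_univ i0)
      have hxi0 : x i0 = c + (1 - ε) := by simp [hxdef, hi0z]
      nlinarith
    nlinarith
  · -- column player's constrained deviations
    intro y' hy' hd
    have hy'i : ∀ i, i ≠ z → y' i = 0 := by
      intro i hi
      have hne := Set.eq_empty_iff_forall_notMem.mp hd i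
      simp only [Set.mem_inter_iff, supp, Set.mem_setOf_eq] at hne
      have : ¬ 0 < y' i := fun h => hne ⟨h, hxpos i hi⟩
      exact le_antisymm (not_lt.mp this) (hy'.1 i)
    have hy'eq : y' = pureStrat z := by
      funext i
      by_cases hi : i = z
      · subst hi
        have hs := hy'.2
        rw [Finset.sum_eq_single z (fun b _ hb => hy'i b hb) (by simp)] at hs
        simp [pureStrat, hs]
      · simp [pureStrat, hi, hy'i i hi]
    rw [hy'eq]
    linarith
end

section
/- Let φ be a 3CNF formula with n ≥ 4 variables and ε = 1/(2n³). In any ε-Nash equilibrium (x, y) of SV(φ) in which both players' expected payoffs are at least n − 1 − ε, each player assigns total probability at most ε to the strategies in V ∪ C (variables and clauses). -/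
open Finset

/-- A literal over `n` variables: a variable together with a sign
(`true` = the positive literal, `false` = the negated literal). -/
abbrev Lit (n : ℕ) := Fin n × Bool

/-- Negation of a literal. -/
def negLit {n : ℕ} (l : Lit n) : Lit n := (l.1, !l.2)

/-- A 3CNF formula with `n` variables and `m` clauses; each clause is a set of
exactly 3 literals. -/
structure CNF3 (n m : ℕ) where
  clause : Fin m → Finset (Lit n)
  card3 : ∀ c, (clause c).card = 3

/-- An assignment `a` satisfies a clause if some literal of the clause is true under `a`. -/
def SatAssign {n m : ℕ} (φ : CNF3 n m) (a : Fin n → Bool) : Prop :=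
  ∀ c, ∃ l ∈ φ.clause c, a l.1 = l.2

/-- Satisfiability of a 3CNF formula. -/
def CNF3.Satisfiable {n m : ℕ} (φ : CNF3 n m) : Prop :=
  ∃ a : Fin n → Bool, SatAssign φ a

/-- Strategy set of the game `SV(φ)`: literals, variables, and clauses. -/
abbrev SVStrat (n m : ℕ) := Lit n ⊕ (Fin n ⊕ Fin m)

/-- The row player's payoff in the game `SV(φ)`. -/
def svU1 {n m : ℕ} (φ : CNF3 n m) : SVStrat n m → SVStrat n m → ℝ
  | Sum.inl a, Sum.inl b => if a = negLit b then (n : ℝ) - 4 else (n : ℝ) - 1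
  | Sum.inl _, Sum.inr _ => (n : ℝ) - 4
  | Sum.inr (Sum.inl w), Sum.inl l => if l.1 = w then 0 else (n : ℝ)
  | Sum.inr (Sum.inr c), Sum.inl l => if l ∈ φ.clause c then 0 else (n : ℝ)
  | Sum.inr _, Sum.inr _ => (n : ℝ) - 4

/-- The column player's payoff in the symmetric game `SV(φ)`. -/
def svU2 {n m : ℕ} (φ : CNF3 n m) (a b : SVStrat n m) : ℝ := svU1 φ b a


/-- Indicator of the variable/clause part of the strategy set. -/
def indVC {n m : ℕ} : SVStrat n m → ℝ := Sum.elim (fun _ => 0) (fun _ => 1)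

lemma termBound {n m : ℕ} (hn : 4 ≤ n) (φ : CNF3 n m) (i j : SVStrat n m) :
    svU1 φ i j + svU1 φ j i ≤
      2 * (n : ℝ) - 2 - 2 * indVC i - 2 * indVC j - 2 * (indVC i * indVC j) := by
  have hn' : (4 : ℝ) ≤ n := by exact_mod_cast hn
  rcases i with a | (w | c) <;> rcases j with b | (w' | c') <;>
    simp only [svU1, indVC, Sum.elim_inl, Sum.elim_inr] <;>
    first
      | (split_ifs <;> linarith)
      | linarith

theorem stmt13 {n m : ℕ} (hn : 4 ≤ n) (φ : CNF3 n m)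
    (ε : ℝ) (hε : ε = 1 / (2 * (n : ℝ) ^ 3))
    (x y : SVStrat n m → ℝ)
    (hNash : IsEpsNash (svU1 φ) (svU2 φ) x y ε)
    (hx : (n : ℝ) - 1 - ε ≤ payoff (svU1 φ) x y)
    (hy : (n : ℝ) - 1 - ε ≤ payoff (svU2 φ) x y) :
    (∑ s : Fin n ⊕ Fin m, x (Sum.inr s)) ≤ ε ∧
    (∑ s : Fin n ⊕ Fin m, y (Sum.inr s)) ≤ ε := by
  obtain ⟨⟨hx0, hx1⟩, ⟨hy0, hy1⟩, -, -⟩ := hNash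
  have hq0 : (0:ℝ) ≤ ∑ s : Fin n ⊕ Fin m, x (Sum.inr s) :=
    Finset.sum_nonneg fun s _ => hx0 _
  have hp0 : (0:ℝ) ≤ ∑ s : Fin n ⊕ Fin m, y (Sum.inr s) :=
    Finset.sum_nonneg fun s _ => hy0 _
  have hxind : ∑ i, x i * indVC i = ∑ s : Fin n ⊕ Fin m, x (Sum.inr s) := by
    rw [Fintype.sum_sum_type]
    simp [indVC]
  have hyind : ∑ i, y i * indVC i = ∑ s : Fin n ⊕ Fin m, y (Sum.inr s) := by
    rw [Fintype.sum_sum_type]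
    simp [indVC]
  set q := ∑ s : Fin n ⊕ Fin m, x (Sum.inr s) with hqdef
  set p := ∑ s : Fin n ⊕ Fin m, y (Sum.inr s) with hpdef
  have key : payoff (svU1 φ) x y + payoff (svU2 φ) x y ≤
      2 * (n : ℝ) - 2 - 2 * q - 2 * p - 2 * (q * p) := by
    have step1 : payoff (svU1 φ) x y + payoff (svU2 φ) x y =
        ∑ i, ∑ j, x i * y j * (svU1 φ i j + svU1 φ j i) := by
      unfold payoff svU2
      rw [← Finset.sum_add_distrib]
      refine Finset.sum_congr rfl fun i _ => ?_
      rw [← Finset.sum_add_distrib]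
      refine Finset.sum_congr rfl fun j _ => ?_
      ring
    have step2 : ∑ i, ∑ j, x i * y j * (svU1 φ i j + svU1 φ j i) ≤
        ∑ i, ∑ j, x i * y j *
          (2 * (n : ℝ) - 2 - 2 * indVC i - 2 * indVC j - 2 * (indVC i * indVC j)) := by
      refine Finset.sum_le_sum fun i _ => Finset.sum_le_sum fun j _ => ?_
      exact mul_le_mul_of_nonneg_left (termBound hn φ i j)
        (mul_nonneg (hx0 i) (hy0 j))
    have step3 : ∑ i, ∑ j, x i * y j *
        (2 * (n : ℝ) - 2 - 2 * indVC i - 2 * indVC j - 2 * (indVC i * indVC j)) =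
        2 * (n : ℝ) - 2 - 2 * q - 2 * p - 2 * (q * p) := by
      have inner : ∀ i : SVStrat n m, ∑ j, x i * y j *
          (2 * (n : ℝ) - 2 - 2 * indVC i - 2 * indVC j - 2 * (indVC i * indVC j)) =
          x i * ((2 * (n : ℝ) - 2 - 2 * indVC i) - (2 + 2 * indVC i) * p) := by
        intro i
        have e : ∀ j : SVStrat n m, x i * y j *
            (2 * (n : ℝ) - 2 - 2 * indVC i - 2 * indVC j - 2 * (indVC i * indVC j)) =
            x i * ((2 * (n : ℝ) - 2 - 2 * indVC i) * y j
              - (2 + 2 * indVC i) * (y j * indVC j)) := fun j => by ring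
        rw [Finset.sum_congr rfl fun j _ => e j, ← Finset.mul_sum,
          Finset.sum_sub_distrib, ← Finset.mul_sum, ← Finset.mul_sum, hy1, hyind]
        ring
      rw [Finset.sum_congr rfl fun i _ => inner i]
      have e2 : ∀ i : SVStrat n m,
          x i * ((2 * (n : ℝ) - 2 - 2 * indVC i) - (2 + 2 * indVC i) * p) =
          (2 * (n : ℝ) - 2 - 2 * p) * x i - (2 + 2 * p) * (x i * indVC i) :=
        fun i => by ring
      rw [Finset.sum_congr rfl fun i _ => e2 i, Finset.sum_sub_distrib,
        ← Finset.mul_sum, ← Finset.mul_sum, hx1, hxind]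
      ring
    calc payoff (svU1 φ) x y + payoff (svU2 φ) x y
        = ∑ i, ∑ j, x i * y j * (svU1 φ i j + svU1 φ j i) := step1
      _ ≤ _ := step2
      _ = _ := step3
  have hpq : 0 ≤ q * p := mul_nonneg hq0 hp0
  constructor <;> linarith
end

section
/- Let φ be a 3CNF formula with n ≥ 4 variables and ε = 1/(2n³). In any ε-Nash equilibrium (x, y) of SV(φ) in which both players' expected payoffs are at least n − 1 − ε, for every literal l ∈ L the total probability that the row player assigns to {l, −l} is at least 1/n − 2ε, and likewise for the column player. -/
open Finset

lemma payoff_pure_left {S : Type*} [Fintype S] [DecidableEq S]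
    (A : S → S → ℝ) (s : S) (y : S → ℝ) :
    payoff A (pureStrat s) y = ∑ j, y j * A s j := by
  unfold payoff pureStrat
  rw [Fintype.sum_eq_single s]
  · simp [mul_comm]
  · intro i hi; simp [hi]

lemma payoff_eq {S : Type*} [Fintype S] (A : S → S → ℝ) (x y : S → ℝ) :
    payoff A x y = ∑ i, x i * ∑ j, y j * A i j := by
  unfold payoff
  refine Finset.sum_congr rfl fun i _ => ?_
  rw [Finset.mul_sum]
  exact Finset.sum_congr rfl fun j _ => by ring

lemma payoff_swap {S : Type*} [Fintype S] (A : S → S → ℝ) (x y : S → ℝ) :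
    payoff (fun a b => A b a) x y = payoff A y x := by
  unfold payoff
  rw [Finset.sum_comm]
  exact Finset.sum_congr rfl fun j _ => Finset.sum_congr rfl fun i _ => by ring

lemma U1_upper {n m : ℕ} (φ : CNF3 n m) (hn4 : (4:ℝ) ≤ n)
    {x y : SVStrat n m → ℝ}
    (hx : x ∈ simplex (SVStrat n m)) (hy : y ∈ simplex (SVStrat n m)) :
    payoff (svU1 φ) x y ≤ ((n:ℝ) - 1) - 3 * (∑ t : Fin n ⊕ Fin m, y (Sum.inr t))
      + (∑ t : Fin n ⊕ Fin m, x (Sum.inr t)) := by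
  have hRy0 : 0 ≤ ∑ t : Fin n ⊕ Fin m, y (Sum.inr t) :=
    Finset.sum_nonneg fun t _ => hy.1 _
  have hRx0 : 0 ≤ ∑ t : Fin n ⊕ Fin m, x (Sum.inr t) :=
    Finset.sum_nonneg fun t _ => hx.1 _
  have hLy : ∑ l : Lit n, y (Sum.inl l) = 1 - ∑ t : Fin n ⊕ Fin m, y (Sum.inr t) := by
    have h := hy.2; rw [Fintype.sum_sum_type] at h; linarith
  have hLx : ∑ l : Lit n, x (Sum.inl l) = 1 - ∑ t : Fin n ⊕ Fin m, x (Sum.inr t) := by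
    have h := hx.2; rw [Fintype.sum_sum_type] at h; linarith
  have hrowL : ∀ a : Lit n, ∑ j, y j * svU1 φ (Sum.inl a) j
      ≤ ((n:ℝ) - 1) - 3 * (∑ t : Fin n ⊕ Fin m, y (Sum.inr t)) := by
    intro a
    rw [Fintype.sum_sum_type]
    have h1 : ∑ l : Lit n, y (Sum.inl l) * svU1 φ (Sum.inl a) (Sum.inl l)
        ≤ ((n:ℝ) - 1) * ∑ l : Lit n, y (Sum.inl l) := by
      rw [Finset.mul_sum]
      refine Finset.sum_le_sum fun l _ => ?_
      have h0 := hy.1 (Sum.inl l)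
      simp only [svU1]
      split_ifs <;> nlinarith
    have h2 : ∑ t : Fin n ⊕ Fin m, y (Sum.inr t) * svU1 φ (Sum.inl a) (Sum.inr t)
        = ((n:ℝ) - 4) * ∑ t : Fin n ⊕ Fin m, y (Sum.inr t) := by
      rw [Finset.mul_sum]
      exact Finset.sum_congr rfl fun t _ => by cases t <;> simp [svU1, mul_comm]
    rw [hLy] at h1
    nlinarith [h1, h2]
  have hrowR : ∀ t : Fin n ⊕ Fin m, ∑ j, y j * svU1 φ (Sum.inr t) j
      ≤ (n:ℝ) - 4 * (∑ t : Fin n ⊕ Fin m, y (Sum.inr t)) := by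
    intro t
    rw [Fintype.sum_sum_type]
    have h1 : ∑ l : Lit n, y (Sum.inl l) * svU1 φ (Sum.inr t) (Sum.inl l)
        ≤ (n:ℝ) * ∑ l : Lit n, y (Sum.inl l) := by
      rw [Finset.mul_sum]
      refine Finset.sum_le_sum fun l _ => ?_
      have h0 := hy.1 (Sum.inl l)
      cases t <;> simp only [svU1] <;> split_ifs <;> nlinarith
    have h2 : ∑ s : Fin n ⊕ Fin m, y (Sum.inr s) * svU1 φ (Sum.inr t) (Sum.inr s)
        = ((n:ℝ) - 4) * ∑ s : Fin n ⊕ Fin m, y (Sum.inr s) := by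
      rw [Finset.mul_sum]
      refine Finset.sum_congr rfl fun s _ => ?_
      cases t <;> cases s <;> simp [svU1, mul_comm]
    rw [hLy] at h1
    nlinarith [h1, h2]
  rw [payoff_eq, Fintype.sum_sum_type]
  have hA : ∑ l : Lit n, x (Sum.inl l) * ∑ j, y j * svU1 φ (Sum.inl l) j
      ≤ (∑ l : Lit n, x (Sum.inl l)) *
        (((n:ℝ) - 1) - 3 * (∑ t : Fin n ⊕ Fin m, y (Sum.inr t))) := by
    rw [Finset.sum_mul]
    exact Finset.sum_le_sum fun l _ =>
      mul_le_mul_of_nonneg_left (hrowL l) (hx.1 _)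
  have hB : ∑ t : Fin n ⊕ Fin m, x (Sum.inr t) * ∑ j, y j * svU1 φ (Sum.inr t) j
      ≤ (∑ t : Fin n ⊕ Fin m, x (Sum.inr t)) *
        ((n:ℝ) - 4 * (∑ t : Fin n ⊕ Fin m, y (Sum.inr t))) := by
    rw [Finset.sum_mul]
    exact Finset.sum_le_sum fun t _ =>
      mul_le_mul_of_nonneg_left (hrowR t) (hx.1 _)
  rw [hLx] at hA
  nlinarith [hA, hB]

lemma dev_var {n m : ℕ} (φ : CNF3 n m) {y : SVStrat n m → ℝ}
    (hy : y ∈ simplex (SVStrat n m)) (w : Fin n) :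
    payoff (svU1 φ) (pureStrat (Sum.inr (Sum.inl w))) y
      = (n:ℝ) * ((1 - ∑ t : Fin n ⊕ Fin m, y (Sum.inr t))
          - (y (Sum.inl (w, true)) + y (Sum.inl (w, false))))
        + ((n:ℝ) - 4) * (∑ t : Fin n ⊕ Fin m, y (Sum.inr t)) := by
  have hLy : ∑ l : Lit n, y (Sum.inl l) = 1 - ∑ t : Fin n ⊕ Fin m, y (Sum.inr t) := by
    have h := hy.2; rw [Fintype.sum_sum_type] at h; linarith
  rw [payoff_pure_left, Fintype.sum_sum_type]
  have h2 : ∑ t : Fin n ⊕ Fin m, y (Sum.inr t) * svU1 φ (Sum.inr (Sum.inl w)) (Sum.inr t)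
      = ((n:ℝ) - 4) * ∑ t : Fin n ⊕ Fin m, y (Sum.inr t) := by
    rw [Finset.mul_sum]
    exact Finset.sum_congr rfl fun t _ => by cases t <;> simp [svU1, mul_comm]
  have h1 : ∑ l : Lit n, y (Sum.inl l) * svU1 φ (Sum.inr (Sum.inl w)) (Sum.inl l)
      = (n:ℝ) * (∑ l : Lit n, y (Sum.inl l))
        - (n:ℝ) * (y (Sum.inl (w, true)) + y (Sum.inl (w, false))) := by
    have key : ∀ l : Lit n, y (Sum.inl l) * svU1 φ (Sum.inr (Sum.inl w)) (Sum.inl l)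
        = (n:ℝ) * y (Sum.inl l) - (if l.1 = w then (n:ℝ) * y (Sum.inl l) else 0) := by
      intro l
      simp only [svU1]
      split_ifs <;> ring
    rw [Finset.sum_congr rfl fun l _ => key l, Finset.sum_sub_distrib, ← Finset.mul_sum]
    congr 1
    rw [Fintype.sum_prod_type]
    have inner : ∀ v : Fin n,
        (∑ b : Bool, if ((v, b) : Lit n).1 = w then (n:ℝ) * y (Sum.inl (v, b)) else 0)
        = if v = w then (n:ℝ) * (y (Sum.inl (v, true)) + y (Sum.inl (v, false))) else 0 := by
      intro v
      rw [Fintype.sum_bool]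
      simp only []
      split_ifs <;> ring
    rw [Finset.sum_congr rfl fun v _ => inner v, Finset.sum_ite_eq' univ w]
    simp
  rw [h1, h2, hLy]
  ring

lemma main_half {n m : ℕ} (φ : CNF3 n m) (hn : 4 ≤ n) {ε : ℝ} (hε0 : 0 ≤ ε)
    {x y : SVStrat n m → ℝ}
    (hx : x ∈ simplex (SVStrat n m)) (hy : y ∈ simplex (SVStrat n m))
    (hdev : ∀ s, payoff (svU1 φ) (pureStrat s) y ≤ payoff (svU1 φ) x y + ε)
    (h1 : (n:ℝ) - 1 - ε ≤ payoff (svU1 φ) x y)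
    (h2 : (n:ℝ) - 1 - ε ≤ payoff (svU1 φ) y x)
    (w : Fin n) :
    1 / (n:ℝ) - 2 * ε ≤ y (Sum.inl (w, true)) + y (Sum.inl (w, false)) := by
  have hn4 : (4:ℝ) ≤ n := by exact_mod_cast hn
  have hRx0 : 0 ≤ ∑ t : Fin n ⊕ Fin m, x (Sum.inr t) :=
    Finset.sum_nonneg fun t _ => hx.1 _
  have hRy0 : 0 ≤ ∑ t : Fin n ⊕ Fin m, y (Sum.inr t) :=
    Finset.sum_nonneg fun t _ => hy.1 _
  have hU1 := U1_upper φ hn4 hx hy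
  have hU2 := U1_upper φ hn4 hy hx
  have hdevw := hdev (Sum.inr (Sum.inl w))
  rw [dev_var φ hy w] at hdevw
  set Rx := ∑ t : Fin n ⊕ Fin m, x (Sum.inr t) with hRxdef
  set Ry := ∑ t : Fin n ⊕ Fin m, y (Sum.inr t) with hRydef
  set P := y (Sum.inl (w, true)) + y (Sum.inl (w, false)) with hPdef
  have hsmall : Rx + Ry ≤ ε := by linarith
  have hnP : 1 - 2 * ε ≤ (n:ℝ) * P := by nlinarith
  have hn0 : (0:ℝ) < n := by linarith
  have hPge : (1 - 2 * ε) / n ≤ P := by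
    rw [div_le_iff₀ hn0]
    nlinarith
  have hsplit : (1 - 2 * ε) / (n:ℝ) = 1 / n - (2 * ε) / n := by ring
  have h2e : (2 * ε) / (n:ℝ) ≤ 2 * ε :=
    div_le_self (by linarith) (by linarith)
  linarith

theorem stmt14 {n m : ℕ} (hn : 4 ≤ n) (φ : CNF3 n m)
    (ε : ℝ) (hε : ε = 1 / (2 * (n : ℝ) ^ 3))
    (x y : SVStrat n m → ℝ)
    (hNash : IsEpsNash (svU1 φ) (svU2 φ) x y ε)
    (hx : (n : ℝ) - 1 - ε ≤ payoff (svU1 φ) x y)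
    (hy : (n : ℝ) - 1 - ε ≤ payoff (svU2 φ) x y) :
    ∀ l : Lit n,
      1 / (n : ℝ) - 2 * ε ≤ x (Sum.inl l) + x (Sum.inl (negLit l)) ∧
      1 / (n : ℝ) - 2 * ε ≤ y (Sum.inl l) + y (Sum.inl (negLit l)) := by
  obtain ⟨hxs, hys, hN1, hN2⟩ := hNash
  have hε0 : 0 ≤ ε := by rw [hε]; positivity
  have hU2eq : payoff (svU2 φ) x y = payoff (svU1 φ) y x := payoff_swap (svU1 φ) x y
  have hdev2 : ∀ s, payoff (svU1 φ) (pureStrat s) x ≤ payoff (svU1 φ) y x + ε := by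
    intro s
    have h := hN2 s
    rw [hU2eq] at h
    have h' : payoff (svU2 φ) x (pureStrat s) = payoff (svU1 φ) (pureStrat s) x :=
      payoff_swap (svU1 φ) x (pureStrat s)
    linarith [h'.symm.le.trans h]
  have hy' : (n:ℝ) - 1 - ε ≤ payoff (svU1 φ) y x := by rw [← hU2eq]; exact hy
  intro l
  obtain ⟨v, b⟩ := l
  have hX := main_half φ hn hε0 hys hxs hdev2 hy' hx v
  have hY := main_half φ hn hε0 hxs hys hN1 hx hy' v
  cases b
  · have e : negLit ((v, false) : Lit n) = (v, true) := rfl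
    rw [e]
    exact ⟨by linarith, by linarith⟩
  · have e : negLit ((v, true) : Lit n) = (v, false) := rfl
    rw [e]
    exact ⟨by linarith, by linarith⟩
end
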